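/- arXiv:2011.10733 — 5 statements merged into one kernel-verified Lean document; each statement's English description precedes it below -/
import Mathlib

section
/- If X is a normal topological space and f, g, h : X → Y are continuous maps, then D(f,h) ≤ D(f,g) + D(g,h). -/
open ContinuousMap Set ENNReal

/-- Homotopic distance between continuous maps `f g : C(X, Y)`: the least `k`
such that some open cover `U_0, ..., U_k` of `X` satisfies
`f|_{U i} ≃ g|_{U i}` for all `i`; `⊤` if no such cover exists. -/
noncomputable def hD {X Y : Type*} [TopologicalSpace X] [TopologicalSpace Y]
    (f g : C(X, Y)) : ℕ∞ :=
  sInf {n : ℕ∞ | ∃ k : ℕ, n = k ∧ ∃ U : Fin (k + 1) → Set X,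
    (∀ i, IsOpen (U i)) ∧ (⋃ i, U i) = univ ∧
    ∀ i, (f.restrict (U i)).Homotopic (g.restrict (U i))}

/-- The open ball of radius `r` around `f` for the homotopic distance. -/
noncomputable def hBall {X Y : Type*} [TopologicalSpace X] [TopologicalSpace Y]
    (f : C(X, Y)) (r : ℝ) : Set C(X, Y) :=
  {g | (hD f g : ℝ≥0∞) < ENNReal.ofReal r}

/-- The topology on `Map(X,Y)` induced by the homotopic distance pseudometric,
generated by the open balls. -/
noncomputable def hTop (X Y : Type*) [TopologicalSpace X] [TopologicalSpace Y] :
    TopologicalSpace C(X, Y) :=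
  TopologicalSpace.generateFrom {s | ∃ (f : C(X, Y)) (r : ℝ), 0 < r ∧ s = hBall f r}

section Aux

variable {X Y : Type*} [TopologicalSpace X] [TopologicalSpace Y]

/-- Restricting a homotopy to a smaller set. -/
lemma homotopic_restrict_mono (f g : C(X, Y)) {s t : Set X} (hst : s ⊆ t)
    (hfg : (f.restrict t).Homotopic (g.restrict t)) :
    (f.restrict s).Homotopic (g.restrict s) := by
  let ι : C(s, t) := ⟨fun x => ⟨x.1, hst x.2⟩, continuous_subtype_val.subtype_mk _⟩
  have h2 := ContinuousMap.Homotopic.comp hfg (ContinuousMap.Homotopic.refl ι)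
  have e1 : (f.restrict t).comp ι = f.restrict s := by ext x; rfl
  have e2 : (g.restrict t).comp ι = g.restrict s := by ext x; rfl
  rwa [e1, e2] at h2

/-- Gluing homotopies over pairwise disjoint open sets. -/
lemma homotopic_glue {ι : Type*} (f g : C(X, Y)) (S : ι → Set X)
    (ho : ∀ i, IsOpen (S i)) (hd : Pairwise (Function.onFun Disjoint S))
    (hh : ∀ i, (f.restrict (S i)).Homotopic (g.restrict (S i))) :
    (f.restrict (⋃ i, S i)).Homotopic (g.restrict (⋃ i, S i)) := by
  classical
  have H : ∀ i, ContinuousMap.Homotopy (f.restrict (S i)) (g.restrict (S i)) := fun i => (hh i).some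
  set U : Set X := ⋃ i, S i with hU
  have pick : ∀ x : U, ∃ i, (x : X) ∈ S i := fun x => mem_iUnion.mp x.2
  let pk : U → ι := fun x => (pick x).choose
  have hpk : ∀ x : U, (x : X) ∈ S (pk x) := fun x => (pick x).choose_spec
  have hpk_eq : ∀ (x : U) (i : ι), (x : X) ∈ S i → pk x = i := by
    intro x i hi
    by_contra hne
    exact Set.disjoint_left.mp (hd hne) (hpk x) hi
  let F : ι → (unitInterval × U) → Y := fun i p =>
    if hp : (p.2 : X) ∈ S i then H i (p.1, ⟨p.2, hp⟩) else f p.2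
  have hFcont : ∀ i, ContinuousOn (F i)
      ((univ : Set unitInterval) ×ˢ (Subtype.val ⁻¹' S i)) := by
    intro i
    rw [continuousOn_iff_continuous_restrict]
    have : (((univ : Set unitInterval) ×ˢ (Subtype.val ⁻¹' S i)).domRestrict (F i))
        = fun q => H i (q.1.1, ⟨q.1.2, q.2.2⟩) := by
      funext q
      exact dif_pos q.2.2
    rw [this]
    exact (H i).continuous.comp <|
      ((continuous_fst.comp continuous_subtype_val).prodMk
        ((continuous_subtype_val.comp (continuous_snd.comp continuous_subtype_val)).subtype_mk _))
  let K : unitInterval × U → Y := fun p => F (pk p.2) p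
  have hK : Continuous K := by
    rw [continuous_iff_continuousAt]
    intro p
    have hmem : p ∈ (univ : Set unitInterval) ×ˢ (Subtype.val ⁻¹' S (pk p.2)) :=
      ⟨mem_univ _, hpk p.2⟩
    have hopen : IsOpen ((univ : Set unitInterval) ×ˢ (Subtype.val ⁻¹' S (pk p.2) : Set U)) :=
      isOpen_univ.prod ((ho _).preimage continuous_subtype_val)
    have h1 : ContinuousAt (F (pk p.2)) p :=
      (hFcont _).continuousAt (hopen.mem_nhds hmem)
    refine h1.congr_of_eventuallyEq ?_
    filter_upwards [hopen.mem_nhds hmem] with q hq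
    have : pk q.2 = pk p.2 := hpk_eq q.2 (pk p.2) hq.2
    simp only [K, this]
  refine ⟨⟨⟨K, hK⟩, ?_, ?_⟩⟩
  · intro x
    show F (pk x) (0, x) = f x
    simp only [F, dif_pos (hpk x)]
    exact (H (pk x)).map_zero_left _
  · intro x
    show F (pk x) (1, x) = g x
    simp only [F, dif_pos (hpk x)]
    exact (H (pk x)).map_one_left _

end Aux

section Aux2

variable {X Y : Type*} [TopologicalSpace X] [TopologicalSpace Y]

lemma exists_urysohn_family {n : ℕ} [NormalSpace X] (U : Fin n → Set X)
    (ho : ∀ i, IsOpen (U i)) (hc : (⋃ i, U i) = univ) :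
    ∃ φ : Fin n → C(X, ℝ), (∀ i x, 0 ≤ φ i x) ∧ (∀ i x, φ i x ≠ 0 → x ∈ U i) ∧
      ∀ x, ∃ i, 0 < φ i x := by
  obtain ⟨v, hvU, hvo, hvc⟩ := exists_subset_iUnion_closure_subset isClosed_univ ho
    (fun x _ => Set.toFinite _) (by rw [hc])
  have key : ∀ i, ∃ φ : C(X, ℝ), EqOn φ 0 (U i)ᶜ ∧ EqOn φ 1 (closure (v i)) ∧
      ∀ x, φ x ∈ Icc (0 : ℝ) 1 := by
    intro i
    refine exists_continuous_zero_one_of_isClosed (ho i).isClosed_compl isClosed_closure ?_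
    exact Set.disjoint_left.mpr fun {a} ha hb => ha (hvc i hb)
  choose φ h0 h1 h01 using key
  refine ⟨φ, fun i x => (h01 i x).1, ?_, ?_⟩
  · intro i x hx
    by_contra hxU
    exact hx (h0 i hxU)
  · intro x
    obtain ⟨i, hi⟩ := mem_iUnion.mp (hvU (mem_univ x))
    exact ⟨i, by rw [h1 i (subset_closure hi)]; norm_num⟩

lemma comb [NormalSpace X] (f g h : C(X, Y)) {n m : ℕ}
    (U : Fin (n + 1) → Set X) (hUo : ∀ i, IsOpen (U i)) (hUc : (⋃ i, U i) = univ)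
    (hUh : ∀ i, (f.restrict (U i)).Homotopic (g.restrict (U i)))
    (V : Fin (m + 1) → Set X) (hVo : ∀ j, IsOpen (V j)) (hVc : (⋃ j, V j) = univ)
    (hVh : ∀ j, (g.restrict (V j)).Homotopic (h.restrict (V j))) :
    ∃ W : Fin (n + m + 1) → Set X, (∀ k, IsOpen (W k)) ∧ (⋃ k, W k) = univ ∧
      ∀ k, (f.restrict (W k)).Homotopic (h.restrict (W k)) := by
  classical
  obtain ⟨φ, hφ0, hφU, hφpos⟩ := exists_urysohn_family U hUo hUc
  obtain ⟨ψ, hψ0, hψV, hψpos⟩ := exists_urysohn_family V hVo hVc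
  set θ : Fin (n + 1) × Fin (m + 1) → X → ℝ := fun p x => φ p.1 x * ψ p.2 x with hθ
  have hθc : ∀ p, Continuous (θ p) := fun p => (φ p.1).continuous.mul (ψ p.2).continuous
  have hθ0 : ∀ p x, 0 ≤ θ p x := fun p x => mul_nonneg (hφ0 _ _) (hψ0 _ _)
  -- the pieces
  set P : Fin (n + 1) × Fin (m + 1) → Set X := fun p =>
    {x | 0 < θ p x ∧ ∀ q : Fin (n + 1) × Fin (m + 1),
      q.1.1 + q.2.1 = p.1.1 + p.2.1 → q ≠ p → θ q x < θ p x} with hP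
  have hPo : ∀ p, IsOpen (P p) := by
    intro p
    have : P p = {x | 0 < θ p x} ∩
        ⋂ (q : Fin (n + 1) × Fin (m + 1)) (_ : q.1.1 + q.2.1 = p.1.1 + p.2.1) (_ : q ≠ p),
          {x | θ q x < θ p x} := by
      ext x
      constructor
      · rintro ⟨h1, h2⟩
        exact ⟨h1, by simpa [mem_iInter] using h2⟩
      · rintro ⟨h1, h2⟩
        exact ⟨h1, by simpa [mem_iInter] using h2⟩
    rw [this]
    refine ((isOpen_lt continuous_const (hθc p)).inter ?_)
    refine isOpen_iInter_of_finite fun q => ?_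
    refine isOpen_iInter_of_finite fun _ => ?_
    exact isOpen_iInter_of_finite fun _ => isOpen_lt (hθc q) (hθc p)
  have hPU : ∀ p, P p ⊆ U p.1 ∩ V p.2 := by
    intro p x hx
    have hpos := hx.1
    constructor
    · refine hφU p.1 x fun h0 => ?_
      rw [hθ] at hpos; simp only [h0, zero_mul] at hpos; exact lt_irrefl 0 hpos
    · refine hψV p.2 x fun h0 => ?_
      rw [hθ] at hpos; simp only [h0, mul_zero] at hpos; exact lt_irrefl 0 hpos
  -- coverage
  have hcov : ∀ x : X, ∃ p : Fin (n + 1) × Fin (m + 1), x ∈ P p := by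
    intro x
    obtain ⟨i0, hi0⟩ := hφpos x
    obtain ⟨j0, hj0⟩ := hψpos x
    set sφ := Finset.univ.filter (fun i => 0 < φ i x) with hsφ
    set sψ := Finset.univ.filter (fun j => 0 < ψ j x) with hsψ
    have hsφne : sφ.Nonempty := ⟨i0, by simp [hsφ, hi0]⟩
    have hsψne : sψ.Nonempty := ⟨j0, by simp [hsψ, hj0]⟩
    set i := sφ.max' hsφne with hi
    set j := sψ.max' hsψne with hj
    have hip : 0 < φ i x := by
      have := sφ.max'_mem hsφne
      simpa [hsφ] using this
    have hjp : 0 < ψ j x := by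
      have := sψ.max'_mem hsψne
      simpa [hsψ] using this
    have himax : ∀ a, 0 < φ a x → a ≤ i := fun a ha => Finset.le_max' _ _ (by simp [hsφ, ha])
    have hjmax : ∀ b, 0 < ψ b x → b ≤ j := fun b hb => Finset.le_max' _ _ (by simp [hsψ, hb])
    refine ⟨(i, j), ⟨mul_pos hip hjp, ?_⟩⟩
    intro q hsum hne
    have hq0 : θ q x = 0 := by
      rcases le_or_gt q.1 i with hq1 | hq1
      · rcases le_or_gt q.2 j with hq2 | hq2
        · exfalso
          apply hne
          have hsum' : q.1.1 + q.2.1 = i.1 + j.1 := by simpa using hsum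
          have hq1' : q.1.1 ≤ i.1 := hq1
          have hq2' : q.2.1 ≤ j.1 := hq2
          have h1 : q.1.1 = i.1 := by omega
          have h2 : q.2.1 = j.1 := by omega
          exact Prod.ext (Fin.ext h1) (Fin.ext h2)
        · have : ψ q.2 x = 0 := by
            have := mt (hjmax q.2) (not_le.mpr hq2)
            exact le_antisymm (not_lt.mp this) (hψ0 _ _)
          simp [hθ, this]
      · have : φ q.1 x = 0 := by
          have := mt (himax q.1) (not_le.mpr hq1)
          exact le_antisymm (not_lt.mp this) (hφ0 _ _)
        simp [hθ, this]
    rw [hq0]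
    exact mul_pos hip hjp
  have hsumlt : ∀ p : Fin (n + 1) × Fin (m + 1), p.1.1 + p.2.1 < n + m + 1 := by
    intro p
    have := p.1.isLt
    have := p.2.isLt
    omega
  refine ⟨fun k => ⋃ p : {p : Fin (n + 1) × Fin (m + 1) // p.1.1 + p.2.1 = k.1}, P p.1,
    ?_, ?_, ?_⟩
  · exact fun k => isOpen_iUnion fun p => hPo p.1
  · apply eq_univ_of_forall
    intro x
    obtain ⟨p, hp⟩ := hcov x
    exact mem_iUnion.mpr ⟨⟨p.1.1 + p.2.1, hsumlt p⟩, mem_iUnion.mpr ⟨⟨p, rfl⟩, hp⟩⟩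
  · intro k
    refine homotopic_glue f h _ (fun p => hPo p.1) ?_ ?_
    · intro p q hne
      rw [Function.onFun, Set.disjoint_left]
      intro x hxp hxq
      have hsum : q.1.1.1 + q.1.2.1 = p.1.1.1 + p.1.2.1 := q.2.trans p.2.symm
      have hne' : q.1 ≠ p.1 := fun e => hne (Subtype.ext e.symm)
      have h1 := hxp.2 q.1 hsum hne'
      have hsum2 : p.1.1.1 + p.1.2.1 = q.1.1.1 + q.1.2.1 := p.2.trans q.2.symm
      have hne2 : p.1 ≠ q.1 := fun e => hne (Subtype.ext e)
      have h2 := hxq.2 p.1 hsum2 hne2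
      exact absurd h1 (not_lt.mpr h2.le)
    · intro p
      have h1 : (f.restrict (P p.1)).Homotopic (g.restrict (P p.1)) :=
        homotopic_restrict_mono f g (subset_trans (hPU p.1) inter_subset_left) (hUh p.1.1)
      have h2 : (g.restrict (P p.1)).Homotopic (h.restrict (P p.1)) :=
        homotopic_restrict_mono g h (subset_trans (hPU p.1) inter_subset_right) (hVh p.1.2)
      exact h1.trans h2

end Aux2

theorem stmt2 {X Y : Type*} [TopologicalSpace X] [TopologicalSpace Y] [NormalSpace X]
    (f g h : C(X, Y)) : hD f h ≤ hD f g + hD g h := by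
  classical
  by_cases h1 : hD f g = ⊤
  · rw [h1, top_add]; exact le_top
  by_cases h2 : hD g h = ⊤
  · rw [h2, add_top]; exact le_top
  have ne1 : Set.Nonempty {n : ℕ∞ | ∃ k : ℕ, n = k ∧ ∃ U : Fin (k + 1) → Set X,
      (∀ i, IsOpen (U i)) ∧ (⋃ i, U i) = univ ∧
      ∀ i, (f.restrict (U i)).Homotopic (g.restrict (U i))} := by
    by_contra hc
    rw [not_nonempty_iff_eq_empty] at hc
    exact h1 (by rw [hD, hc, sInf_empty])
  have ne2 : Set.Nonempty {n : ℕ∞ | ∃ k : ℕ, n = k ∧ ∃ U : Fin (k + 1) → Set X,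
      (∀ i, IsOpen (U i)) ∧ (⋃ i, U i) = univ ∧
      ∀ i, (g.restrict (U i)).Homotopic (h.restrict (U i))} := by
    by_contra hc
    rw [not_nonempty_iff_eq_empty] at hc
    exact h2 (by rw [hD, hc, sInf_empty])
  have mem1 := csInf_mem ne1
  have mem2 := csInf_mem ne2
  rw [show sInf {n : ℕ∞ | ∃ k : ℕ, n = k ∧ ∃ U : Fin (k + 1) → Set X,
      (∀ i, IsOpen (U i)) ∧ (⋃ i, U i) = univ ∧
      ∀ i, (f.restrict (U i)).Homotopic (g.restrict (U i))} = hD f g from rfl] at mem1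
  rw [show sInf {n : ℕ∞ | ∃ k : ℕ, n = k ∧ ∃ U : Fin (k + 1) → Set X,
      (∀ i, IsOpen (U i)) ∧ (⋃ i, U i) = univ ∧
      ∀ i, (g.restrict (U i)).Homotopic (h.restrict (U i))} = hD g h from rfl] at mem2
  obtain ⟨k₁, hk₁, U, hUo, hUc, hUh⟩ := mem1
  obtain ⟨k₂, hk₂, V, hVo, hVc, hVh⟩ := mem2
  obtain ⟨W, hWo, hWc, hWh⟩ := comb f g h U hUo hUc hUh V hVo hVc hVh
  have hle : hD f h ≤ ((k₁ + k₂ : ℕ) : ℕ∞) :=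
    sInf_le ⟨k₁ + k₂, rfl, W, hWo, hWc, hWh⟩
  rw [hk₁, hk₂, ← Nat.cast_add]
  exact hle
end

section
/- Let X be a normal space, f a continuous map X → Y, and r a real number with 0 < r ≤ 1. Then the open ball B_r(f) = {g : X → Y continuous | D(f,g) < r} in the topology induced by the homotopic distance pseudometric carries the indiscrete (trivial) subspace topology; that is, the only open subsets of B_r(f) are ∅ and B_r(f) itself. -/
open ContinuousMap Set ENNReal

section aux
variable {X Y : Type*} [TopologicalSpace X] [TopologicalSpace Y]

lemma restrict_homotopic {g1 g2 : C(X, Y)} (H : g1.Homotopic g2) (s : Set X) :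
    (g1.restrict s).Homotopic (g2.restrict s) := by
  have hι : Continuous (Subtype.val : s → X) := continuous_subtype_val
  have h := ContinuousMap.Homotopic.comp H (ContinuousMap.Homotopic.refl (⟨Subtype.val, hι⟩ : C(s, X)))
  have e1 : g1.comp ⟨Subtype.val, hι⟩ = g1.restrict s := by ext; rfl
  have e2 : g2.comp ⟨Subtype.val, hι⟩ = g2.restrict s := by ext; rfl
  rwa [e1, e2] at h

lemma hD_congr_right {h g1 g2 : C(X, Y)} (H : g1.Homotopic g2) : hD h g1 = hD h g2 := by
  unfold hD
  congr 1
  ext n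
  constructor <;> rintro ⟨k, hk, U, hU1, hU2, hU3⟩ <;>
    exact ⟨k, hk, U, hU1, hU2, fun i => (hU3 i).trans
      (by first | exact restrict_homotopic H (U i) | exact restrict_homotopic H.symm (U i))⟩

lemma homotopic_of_mem_hBall {f g : C(X, Y)} {r : ℝ} (hr1 : r ≤ 1)
    (hg : g ∈ hBall f r) : f.Homotopic g := by
  have hlt1 : ((hD f g : ℕ∞) : ℝ≥0∞) < 1 :=
    lt_of_lt_of_le hg (by simpa using ENNReal.ofReal_le_one.mpr hr1)
  have h0 : hD f g = 0 := by
    by_contra h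
    have : (1 : ℕ∞) ≤ hD f g := ENat.one_le_iff_ne_zero.mpr h
    have : (1 : ℝ≥0∞) ≤ ((hD f g : ℕ∞) : ℝ≥0∞) := by
      exact_mod_cast this
    exact absurd hlt1 (not_lt.mpr this)
  have hmem : (0 : ℕ∞) ∈ {n : ℕ∞ | ∃ k : ℕ, n = k ∧ ∃ U : Fin (k + 1) → Set X,
      (∀ i, IsOpen (U i)) ∧ (⋃ i, U i) = univ ∧
      ∀ i, (f.restrict (U i)).Homotopic (g.restrict (U i))} := by
    by_contra hn
    have : (1 : ℕ∞) ≤ hD f g := by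
      apply le_sInf
      intro n hnS
      refine ENat.one_le_iff_ne_zero.mpr ?_
      rintro rfl
      exact hn hnS
    rw [h0] at this
    exact absurd this (by simp)
  obtain ⟨k, hk, U, hU1, hU2, hU3⟩ := hmem
  have hk0 : k = 0 := by exact_mod_cast hk.symm
  subst hk0
  have hU0 : ∀ x : X, x ∈ U 0 := by
    intro x
    have : x ∈ ⋃ i, U i := hU2 ▸ mem_univ x
    obtain ⟨i, hi⟩ := mem_iUnion.mp this
    have : i = 0 := Fin.fin_one_eq_zero i
    rwa [this] at hi
  have hcont : Continuous (fun x : X => (⟨x, hU0 x⟩ : U 0)) :=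
    Continuous.subtype_mk continuous_id _
  have h := ContinuousMap.Homotopic.comp (hU3 0) (ContinuousMap.Homotopic.refl (⟨_, hcont⟩ : C(X, U 0)))
  have e1 : (f.restrict (U 0)).comp ⟨_, hcont⟩ = f := by ext; rfl
  have e2 : (g.restrict (U 0)).comp ⟨_, hcont⟩ = g := by ext; rfl
  rwa [e1, e2] at h

end aux

theorem stmt3 {X Y : Type*} [TopologicalSpace X] [TopologicalSpace Y] [NormalSpace X]
    (f : C(X, Y)) (r : ℝ) (hr0 : 0 < r) (hr1 : r ≤ 1)
    (s : Set (hBall f r)) :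
    @IsOpen _ (TopologicalSpace.induced Subtype.val (hTop X Y)) s → s = ∅ ∨ s = univ := by
  intro hs
  obtain ⟨t, ht, rfl⟩ := hs
  have ht' : TopologicalSpace.GenerateOpen
      {s | ∃ (f : C(X, Y)) (r : ℝ), 0 < r ∧ s = hBall f r} t := ht
  clear ht
  induction ht' with
  | basic u hu =>
    obtain ⟨h, r', hr', rfl⟩ := hu
    by_cases hne : (Subtype.val ⁻¹' hBall h r' : Set (hBall f r)).Nonempty
    · right
      obtain ⟨⟨g1, hg1⟩, hg1'⟩ := hne
      ext ⟨g2, hg2⟩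
      simp only [mem_preimage, mem_univ, iff_true]
      have H12 : g1.Homotopic g2 :=
        (homotopic_of_mem_hBall hr1 hg1).symm.trans (homotopic_of_mem_hBall hr1 hg2)
      have : hD h g1 = hD h g2 := hD_congr_right H12
      show g2 ∈ hBall h r'
      simp only [hBall, mem_setOf_eq] at hg1' ⊢
      rw [← this]
      exact hg1'
    · left
      exact Set.not_nonempty_iff_eq_empty.mp hne
  | univ => right; rfl
  | inter u v _ _ ihu ihv =>
    rw [Set.preimage_inter]
    rcases ihu with h1 | h1 <;> rcases ihv with h2 | h2 <;> rw [h1, h2] <;> simp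
  | sUnion S _ ih =>
    rw [Set.preimage_sUnion]
    by_cases hall : ∀ u ∈ S, (Subtype.val ⁻¹' u : Set (hBall f r)) = ∅
    · left
      apply Set.eq_empty_of_forall_notMem
      intro x hx
      simp only [mem_iUnion] at hx
      obtain ⟨u, hu, hx⟩ := hx
      rw [hall u hu] at hx
      exact hx
    · right
      push_neg at hall
      obtain ⟨u, hu, hne⟩ := hall
      have := ih u hu
      rcases this with h | h
      · exact absurd h (Set.nonempty_iff_ne_empty.mp hne)
      · apply Set.eq_univ_of_univ_subset
        rw [← h]
        exact Set.subset_iUnion₂ (s := fun u _ => Subtype.val ⁻¹' u) u hu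
end

section
/- Let X be a normal space, f : X → Y continuous, and r > 1. If B_1(f) is a proper subset of B_r(f), then B_r(f) is not connected in the topology induced by the homotopic distance pseudometric. -/
open ContinuousMap Set ENNReal

lemma hD_eq_zero_iff {X Y : Type*} [TopologicalSpace X] [TopologicalSpace Y]
    (f g : C(X, Y)) : hD f g = 0 ↔ f.Homotopic g := by
  constructor
  · intro h
    have h0 : (0 : ℕ∞) ∈ {n : ℕ∞ | ∃ k : ℕ, n = k ∧ ∃ U : Fin (k + 1) → Set X,
        (∀ i, IsOpen (U i)) ∧ (⋃ i, U i) = univ ∧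
        ∀ i, (f.restrict (U i)).Homotopic (g.restrict (U i))} := by
      by_contra h0
      have : (1 : ℕ∞) ≤ hD f g := by
        apply le_sInf
        intro n hn
        rcases eq_or_ne n 0 with rfl | hne
        · exact absurd hn h0
        · exact ENat.one_le_iff_ne_zero.mpr hne
      simp [h] at this
    obtain ⟨k, hk, U, hopen, hcov, hhom⟩ := h0
    have hk0 : k = 0 := by
      have := hk.symm
      exact_mod_cast Nat.cast_eq_zero.mp (by exact_mod_cast this)
    subst hk0
    have hU0 : U 0 = univ := by
      rw [← hcov, iUnion_congr (fun i => congrArg U (Fin.fin_one_eq_zero i)), iUnion_const]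
    have h := hhom 0
    rw [hU0] at h
    -- transfer homotopy along the homeomorphism univ ≃ X
    let e : C(X, (univ : Set X)) := ⟨fun x => ⟨x, mem_univ x⟩, Continuous.subtype_mk continuous_id _⟩
    have h2 := h.comp (Homotopic.refl e)
    have e1 : (f.restrict univ).comp e = f := by ext x; rfl
    have e2 : (g.restrict univ).comp e = g := by ext x; rfl
    rwa [e1, e2] at h2
  · intro h
    have : (0 : ℕ∞) ∈ {n : ℕ∞ | ∃ k : ℕ, n = k ∧ ∃ U : Fin (k + 1) → Set X,
        (∀ i, IsOpen (U i)) ∧ (⋃ i, U i) = univ ∧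
        ∀ i, (f.restrict (U i)).Homotopic (g.restrict (U i))} := by
      refine ⟨0, by simp, fun _ => univ, fun _ => isOpen_univ, iUnion_const _, fun _ => ?_⟩
      exact ⟨(h.some.compContinuousMap ⟨Subtype.val, continuous_subtype_val⟩ : _)⟩
    exact le_antisymm (sInf_le this) (zero_le)

lemma mem_hBall_one_iff {X Y : Type*} [TopologicalSpace X] [TopologicalSpace Y]
    (f g : C(X, Y)) : g ∈ hBall f 1 ↔ f.Homotopic g := by
  rw [← hD_eq_zero_iff]
  simp only [hBall, mem_setOf_eq, ENNReal.ofReal_one]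
  constructor
  · intro h
    by_contra hne
    have : (1 : ℕ∞) ≤ hD f g := ENat.one_le_iff_ne_zero.mpr hne
    have : (1 : ℝ≥0∞) ≤ (hD f g : ℝ≥0∞) := by exact_mod_cast this
    exact absurd h (not_lt.mpr this)
  · intro h; rw [h]; simp

theorem stmt4 {X Y : Type*} [TopologicalSpace X] [TopologicalSpace Y] [NormalSpace X]
    (f : C(X, Y)) (r : ℝ) (hr : 1 < r) (hproper : hBall f 1 ⊂ hBall f r) :
    ¬ @IsPreconnected _ (hTop X Y) (hBall f r) := by
  intro h
  set s := hBall f r with hs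
  set u := hBall f 1 with hu
  set V := ⋃ g ∈ s \ u, hBall g 1 with hV
  have hu_open : @IsOpen _ (hTop X Y) u :=
    TopologicalSpace.GenerateOpen.basic _ ⟨f, 1, one_pos, rfl⟩
  have hV_open : @IsOpen _ (hTop X Y) V := by
    refine @isOpen_biUnion _ _ (hTop X Y) _ _ fun g _ =>
      TopologicalSpace.GenerateOpen.basic _ ⟨g, 1, one_pos, rfl⟩
  have hself : ∀ g : C(X, Y), g ∈ hBall g 1 := fun g =>
    (mem_hBall_one_iff g g).mpr (Homotopic.refl g)
  have hsub : s ⊆ u ∪ V := by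
    intro g hg
    by_cases hgu : g ∈ u
    · exact Or.inl hgu
    · exact Or.inr (mem_biUnion ⟨hg, hgu⟩ (hself g))
  have hsu : (s ∩ u).Nonempty := by
    refine ⟨f, ?_, hself f⟩
    have : f.Homotopic f := Homotopic.refl f
    simp only [hs, hBall, mem_setOf_eq, (hD_eq_zero_iff f f).mpr this]
    simpa using ENNReal.ofReal_pos.mpr (lt_trans one_pos hr)
  have hsv : (s ∩ V).Nonempty := by
    obtain ⟨g, hgs, hgu⟩ := not_subset.mp hproper.2
    exact ⟨g, hgs, mem_biUnion ⟨hgs, hgu⟩ (hself g)⟩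
  obtain ⟨w, hws, hwu, hwv⟩ := h u V hu_open hV_open hsub hsu hsv
  obtain ⟨g, hg, hwg⟩ := mem_iUnion₂.mp hwv
  -- w ≃ f and w ≃ g, so f ≃ g, so g ∈ u, contradiction
  have h1 : f.Homotopic w := (mem_hBall_one_iff f w).mp hwu
  have h2 : g.Homotopic w := (mem_hBall_one_iff g w).mp hwg
  exact hg.2 ((mem_hBall_one_iff f g).mpr (h1.trans h2.symm))
end

section
/- For any two integers n ≠ m, the homotopic distance between the maps f_n(z) = zⁿ and f_m(z) = z^m on S¹ equals 1; that is, f_n and f_m are not homotopic, but there exist two open sets U_0, U_1 covering S¹ such that f_n restricted to U_i is homotopic to f_m restricted to U_i for i = 0, 1. -/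
open ContinuousMap Set ENNReal

/-- The degree-`n` power map on the circle. -/
noncomputable def fpow (n : ℤ) : C(Circle, Circle) :=
  ⟨fun z => z ^ n, by continuity⟩

open Complex Real unitInterval

/-! ### Auxiliary lemmas about the circle -/

lemma myexp_int_mul (k : ℤ) (x : ℝ) : Circle.exp (k * x) = Circle.exp x ^ k := by
  have := map_zsmul Circle.expHom k x
  simpa [zsmul_eq_mul] using this

lemma myexp_sum {α : Type*} (s : Finset α) (f : α → ℝ) :
    Circle.exp (∑ i ∈ s, f i) = ∏ i ∈ s, Circle.exp (f i) := by
  classical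
  induction s using Finset.induction with
  | empty => simp
  | insert _ _ h ih => rw [Finset.sum_insert h, Finset.prod_insert h, Circle.exp_add, ih]

lemma circle_slit {z : Circle} (hz : (z : ℂ) ≠ -1) : (z : ℂ) ∈ Complex.slitPlane := by
  rw [Complex.mem_slitPlane_iff]
  by_contra hc
  push_neg at hc
  obtain ⟨h1, h2⟩ := hc
  have hn : Complex.normSq z = 1 := z.normSq_coe
  rw [Complex.normSq_apply, h2] at hn
  have : (z : ℂ).re = -1 := by nlinarith [sq_nonneg ((z:ℂ).re + 1)]
  exact hz (Complex.ext (by simp [this]) (by simp [h2]))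

lemma continuousAt_arg_circle {z : Circle} (hz : (z : ℂ) ≠ -1) :
    ContinuousAt (fun w : Circle => Complex.arg w) z :=
  (Complex.continuousAt_arg (circle_slit hz)).comp continuous_subtype_val.continuousAt

lemma circle_neg_ne (z : Circle) : (z : ℂ) ≠ -(z : ℂ) := by
  intro hzz
  have h0 : (z : ℂ) = 0 := by linear_combination hzz / 2
  exact z.coe_ne_zero h0

lemma div_coe_ne_neg_one {z w : Circle} (h : (z : ℂ) ≠ -(w : ℂ)) :
    ((z / w : Circle) : ℂ) ≠ -1 := by
  intro hc
  rw [Circle.coe_div, div_eq_iff (w.coe_ne_zero)] at hc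
  exact h (by rw [hc]; ring)

lemma dist_eq_two_of_neg {z w : Circle} (h : (z : ℂ) = -(w : ℂ)) : dist z w = 2 := by
  rw [show dist z w = dist (z:ℂ) (w:ℂ) from rfl, Complex.dist_eq, h]
  have : -(w:ℂ) - w = -(2 * w) := by ring
  rw [this]
  simp [Circle.norm_coe]

lemma ne_neg_of_dist_lt {z w : Circle} (h : dist z w < 2) : (z : ℂ) ≠ -(w : ℂ) := by
  intro hc
  rw [dist_eq_two_of_neg hc] at h
  norm_num at h

lemma abs_min_sub (a s d : ℝ) (hd : 0 ≤ d) : |min (a + d) s - min a s| ≤ d := by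
  rw [abs_le]
  constructor
  · have : min a s ≤ min (a + d) s := min_le_min (by linarith) le_rfl
    linarith
  · have h1 : min (a + d) s ≤ min (a + d) (s + d) := min_le_min le_rfl (by linarith)
    have h2 : min (a + d) (s + d) = min a s + d := min_add_add_right a s d
    linarith

/-! ### Path lifting for `Circle.exp` -/

/-- Path lifting for `Circle.exp`. -/
lemma exists_lift (γ : C(I, Circle)) : ∃ θ : C(I, ℝ), ∀ t, Circle.exp (θ t) = γ t := by
  have huc : UniformContinuous γ := CompactSpace.uniformContinuous_of_continuous γ.continuous
  obtain ⟨δ, hδ0, hδ⟩ := Metric.uniformContinuous_iff.mp huc 2 (by norm_num)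
  obtain ⟨N, hN⟩ := exists_nat_one_div_lt hδ0
  set M : ℕ := N + 1 with hM
  have hMpos : (0:ℝ) < M := by positivity
  have hMlt : (1:ℝ) / M < δ := by exact_mod_cast hN
  set pc : ℕ → I → I := fun k t =>
    ⟨min ((k : ℝ) / M) (t : ℝ), ⟨le_min (by positivity) t.2.1, (min_le_right _ _).trans t.2.2⟩⟩
      with hpc
  have pc_cont : ∀ k, Continuous fun t => pc k t := fun k =>
    (continuous_const.min continuous_subtype_val).subtype_mk _
  have pc_dist : ∀ k (t : I), dist (pc (k+1) t) (pc k t) ≤ 1 / M := by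
    intro k t
    rw [Subtype.dist_eq, Real.dist_eq]
    have : ((k:ℝ)+1) / M = (k:ℝ)/M + 1/M := by ring
    simpa [hpc, this] using abs_min_sub ((k:ℝ)/M) (t:ℝ) (1/M) (by positivity)
  have pc_zero : ∀ t, pc 0 t = 0 := by
    intro t
    apply Subtype.ext
    simp [hpc, min_eq_left t.2.1]
  have pc_top : ∀ t, pc M t = t := by
    intro t
    apply Subtype.ext
    simp [hpc, div_self hMpos.ne', min_eq_right t.2.2]
  have bnd : ∀ k (t : I), ((γ (pc (k+1) t) / γ (pc k t) : Circle) : ℂ) ≠ -1 := by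
    intro k t
    apply div_coe_ne_neg_one
    apply ne_neg_of_dist_lt
    exact hδ (lt_of_le_of_lt (pc_dist k t) hMlt)
  set u : ℕ → I → Circle := fun k t => γ (pc (k+1) t) / γ (pc k t) with hu
  have u_cont : ∀ k, Continuous (u k) := fun k =>
    (γ.continuous.comp (pc_cont (k+1))).div' (γ.continuous.comp (pc_cont k))
  set θf : I → ℝ := fun t => Complex.arg (γ 0) + ∑ k ∈ Finset.range M, Complex.arg (u k t)
    with hθf
  have θcont : Continuous θf := by
    apply continuous_const.add
    apply continuous_finset_sum
    intro k _
    rw [continuous_iff_continuousAt]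
    intro t
    have h1 : ContinuousAt (u k) t := (u_cont k).continuousAt
    exact ContinuousAt.comp (x := t) (continuousAt_arg_circle (bnd k t)) h1
  refine ⟨⟨θf, θcont⟩, fun t => ?_⟩
  show Circle.exp (θf t) = γ t
  rw [hθf]
  rw [Circle.exp_add, myexp_sum]
  have : ∀ k ∈ Finset.range M, Circle.exp (Complex.arg (u k t)) = u k t := fun k _ =>
    Circle.exp_arg (u k t)
  rw [Finset.prod_congr rfl this, hu]
  rw [Finset.prod_range_div (fun k => γ (pc k t)) M]
  rw [pc_zero, pc_top, Circle.exp_arg]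
  rw [mul_div_assoc']
  rw [mul_comm]
  rw [mul_div_assoc]
  simp

/-- Two lifts differ by a constant. -/
lemma lift_sub_const {θ η : C(I, ℝ)} (h : ∀ t, Circle.exp (θ t) = Circle.exp (η t)) (a b : I) :
    θ a - η a = θ b - η b := by
  set d : I → ℝ := fun t => θ t - η t with hd
  have hdc : Continuous d := θ.continuous.sub η.continuous
  have hint : ∀ t, ∃ k : ℤ, d t = k * (2 * π) := by
    intro t
    obtain ⟨m, hm⟩ := Circle.exp_eq_exp.mp (h t)
    refine ⟨m, ?_⟩
    rw [hd]
    simp only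
    rw [hm]
    ring
  show d a = d b
  by_contra hne
  have hord : OrdConnected (d '' univ) :=
    ((isPreconnected_univ).image d hdc.continuousOn).ordConnected
  obtain ⟨ka, hka⟩ := hint a
  obtain ⟨kb, hkb⟩ := hint b
  have hkakb : ka ≠ kb := fun hcon => hne (by rw [hka, hkb, hcon])
  have key : ∀ (u v : I), ∀ ku kv : ℤ, d u = ku * (2*π) → d v = kv * (2*π) → ku < kv → False := by
    intro u v ku kv hu hv hlt
    have h1 : d u ∈ d '' univ := mem_image_of_mem d (mem_univ u)
    have h2 : d v ∈ d '' univ := mem_image_of_mem d (mem_univ v)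
    have hick : (ku : ℝ) + 1 ≤ kv := by exact_mod_cast hlt
    have hmem : (ku : ℝ) * (2*π) + π ∈ Icc (d u) (d v) := by
      rw [hu, hv]
      constructor
      · nlinarith [pi_pos]
      · nlinarith [pi_pos]
    obtain ⟨x, -, hx⟩ := hord.out h1 h2 hmem
    obtain ⟨k, hk⟩ := hint x
    rw [hk] at hx
    have h2k : (2 * (k : ℝ)) = 2 * ku + 1 := by
      have hpi := pi_pos
      nlinarith [hx]
    have : (2 * k : ℤ) = 2 * ku + 1 := by exact_mod_cast h2k
    omega
  rcases lt_or_gt_of_ne hkakb with hlt | hlt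
  · exact key a b ka kb hka hkb hlt
  · exact key b a kb ka hkb hka hlt

/-! ### The winding number and its properties -/

/-- Winding "number" (times `2π`) of a path in the circle. -/
noncomputable def wind (γ : C(I, Circle)) : ℝ :=
  (exists_lift γ).choose 1 - (exists_lift γ).choose 0

lemma wind_eq (γ : C(I, Circle)) (θ : C(I, ℝ)) (h : ∀ t, Circle.exp (θ t) = γ t) :
    wind γ = θ 1 - θ 0 := by
  have hspec := (exists_lift γ).choose_spec
  have h2 : ∀ t, Circle.exp ((exists_lift γ).choose t) = Circle.exp (θ t) := fun t => by
    rw [hspec t, h t]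
  have := lift_sub_const h2 1 0
  unfold wind
  linarith

/-- Loops that are never antipodal have the same winding. -/
lemma wind_congr {γ δ : C(I, Circle)} (hγ : γ 0 = γ 1) (hδ : δ 0 = δ 1)
    (hne : ∀ s, ((δ s : ℂ)) ≠ -(γ s : ℂ)) : wind γ = wind δ := by
  obtain ⟨θ, hθ⟩ := exists_lift γ
  set φ : I → ℝ := fun s => Complex.arg ((δ s / γ s : Circle)) with hφ
  have hφc : Continuous φ := by
    rw [continuous_iff_continuousAt]
    intro t
    have h1 : ContinuousAt (fun s => (δ s / γ s : Circle)) t :=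
      ((δ.continuous.div' γ.continuous).continuousAt)
    exact ContinuousAt.comp (x := t) (continuousAt_arg_circle (div_coe_ne_neg_one (hne t))) h1
  have hψ : ∀ s, Circle.exp (θ s + φ s) = δ s := by
    intro s
    rw [Circle.exp_add, hθ, hφ]
    simp only
    rw [Circle.exp_arg]
    rw [mul_div_assoc', mul_comm, mul_div_assoc]
    simp
  have h1 := wind_eq γ θ hθ
  have h2 := wind_eq δ ⟨fun s => θ s + φ s, θ.continuous.add hφc⟩ hψ
  simp only [ContinuousMap.coe_mk] at h2
  have hφeq : φ 1 = φ 0 := by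
    rw [hφ]
    simp only
    rw [hγ, hδ]
  rw [h1, h2]
  linarith [hφeq]

/-- The slice of a two-parameter map. -/
noncomputable def wslice (H : C(I × I, Circle)) (t : I) : C(I, Circle) :=
  H.comp ((ContinuousMap.const I t).prodMk (ContinuousMap.id I))

@[simp] lemma wslice_apply (H : C(I × I, Circle)) (t s : I) : wslice H t s = H (t, s) := rfl

lemma wind_wslice_const (H : C(I × I, Circle)) (hloop : ∀ t : I, H (t, 0) = H (t, 1)) :
    wind (wslice H 0) = wind (wslice H 1) := by
  have key : IsLocallyConstant (fun t => wind (wslice H t)) := by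
    rw [IsLocallyConstant.iff_exists_open]
    intro t
    have hf : Continuous fun p : I × I => (H p : ℂ) :=
      continuous_subtype_val.comp H.continuous
    have hg : Continuous fun p : I × I => -(H (t, p.2) : ℂ) := by
      apply Continuous.neg
      exact continuous_subtype_val.comp (H.continuous.comp (continuous_const.prodMk
        continuous_snd))
    have hV : IsOpen {p : I × I | (H p : ℂ) ≠ -(H (t, p.2) : ℂ)} := isOpen_ne_fun hf hg
    have hsub : ({t} ×ˢ (univ : Set I)) ⊆ {p : I × I | (H p : ℂ) ≠ -(H (t, p.2) : ℂ)} := by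
      rintro ⟨t', s⟩ ⟨ht', -⟩
      simp only [mem_singleton_iff] at ht'
      subst ht'
      exact circle_neg_ne _
    obtain ⟨u, v, hu, -, htu, hvuniv, huv⟩ :=
      generalized_tube_lemma isCompact_singleton isCompact_univ hV hsub
    refine ⟨u, hu, htu rfl, ?_⟩
    intro t' ht'
    apply wind_congr (hloop t') (hloop t)
    intro s
    intro hc
    have hmem : (t', s) ∈ u ×ˢ v := ⟨ht', hvuniv (mem_univ s)⟩
    have hne := huv hmem
    simp only [mem_setOf_eq, wslice_apply] at hne hc ⊢
    exact hne (by rw [hc]; ring)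
  exact key.apply_eq_of_preconnectedSpace 0 1

/-! ### Non-homotopy of distinct power maps -/

/-- The basic loop. -/
noncomputable def bloop : C(I, Circle) :=
  ⟨fun s => Circle.exp (2 * π * s), (Circle.exp.continuous.comp
    (continuous_const.mul continuous_subtype_val))⟩

lemma bloop_apply (s : I) : bloop s = Circle.exp (2 * π * s) := rfl

lemma homotopic_fpow_eq {n m : ℤ} (h : (fpow n).Homotopic (fpow m)) : n = m := by
  obtain ⟨F⟩ := h
  set K : C(I × I, Circle) := F.toContinuousMap.comp ((ContinuousMap.id I).prodMap bloop)
    with hK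
  have hKapp : ∀ t s : I, K (t, s) = F (t, bloop s) := fun t s => rfl
  have hloop : ∀ t : I, K (t, 0) = K (t, 1) := by
    intro t
    rw [hKapp, hKapp]
    have : bloop 0 = bloop 1 := by
      rw [bloop_apply, bloop_apply]
      norm_num [Circle.exp_two_pi]
    rw [this]
  have h0 : wind (wslice K 0) = n * (2 * π) := by
    rw [wind_eq (wslice K 0) ⟨fun s => (n : ℝ) * (2 * π) * s, by fun_prop⟩ ?_]
    · simp
    · intro s
      rw [wslice_apply, hKapp]
      show Circle.exp (↑n * (2 * π) * ↑s) = F (0, bloop s)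
      rw [F.apply_zero]
      show Circle.exp (↑n * (2 * π) * ↑s) = (bloop s) ^ n
      rw [bloop_apply, ← myexp_int_mul n (2 * π * s)]
      ring_nf
  have h1 : wind (wslice K 1) = m * (2 * π) := by
    rw [wind_eq (wslice K 1) ⟨fun s => (m : ℝ) * (2 * π) * s, by fun_prop⟩ ?_]
    · simp
    · intro s
      rw [wslice_apply, hKapp]
      show Circle.exp (↑m * (2 * π) * ↑s) = F (1, bloop s)
      rw [F.apply_one]
      show Circle.exp (↑m * (2 * π) * ↑s) = (bloop s) ^ m
      rw [bloop_apply, ← myexp_int_mul m (2 * π * s)]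
      ring_nf
  have hw := wind_wslice_const K hloop
  rw [h0, h1] at hw
  have : (n : ℝ) = m := by
    have hpi := pi_ne_zero
    field_simp at hw
    tauto
  exact_mod_cast this

/-! ### Homotopies on the two standard open sets -/

/-- If the inclusion of `U` admits a continuous logarithm, the power maps are
homotopic on `U`. -/
lemma restrict_homotopic_s7 (n m : ℤ) (U : Set Circle) (θ : C(U, ℝ))
    (hexp : ∀ z : U, Circle.exp (θ z) = (z : Circle)) :
    ((fpow n).restrict U).Homotopic ((fpow m).restrict U) := by
  refine ⟨⟨⟨fun p => Circle.exp (((n : ℝ) + (p.1 : ℝ) * ((m : ℝ) - (n : ℝ))) * θ p.2), ?_⟩,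
    ?_, ?_⟩⟩
  · apply Circle.exp.continuous.comp
    fun_prop
  · intro z
    show Circle.exp (((n : ℝ) + ((0 : I) : ℝ) * ((m : ℝ) - (n : ℝ))) * θ z) = _
    have h0 : ((0 : I) : ℝ) = 0 := rfl
    rw [h0]
    ring_nf
    rw [show ((n : ℝ) * θ z) = ((n : ℤ) : ℝ) * θ z by norm_num, myexp_int_mul, hexp]
    rfl
  · intro z
    show Circle.exp (((n : ℝ) + ((1 : I) : ℝ) * ((m : ℝ) - (n : ℝ))) * θ z) = _
    have h1 : ((1 : I) : ℝ) = 1 := rfl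
    rw [h1]
    ring_nf
    rw [show ((m : ℝ) * θ z) = ((m : ℤ) : ℝ) * θ z by norm_num, myexp_int_mul, hexp]
    rfl

lemma exp_pi_coe : (Circle.exp π : ℂ) = -1 := by
  rw [Circle.coe_exp]
  exact Complex.exp_pi_mul_I

def Uzero : Set Circle := {z : Circle | (z : ℂ) ≠ 1}
def Uone : Set Circle := {z : Circle | (z : ℂ) ≠ -1}

lemma isOpen_Uzero : IsOpen Uzero := isOpen_ne_fun continuous_subtype_val continuous_const
lemma isOpen_Uone : IsOpen Uone := isOpen_ne_fun continuous_subtype_val continuous_const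

lemma union_U : Uzero ∪ Uone = univ := by
  ext z
  simp only [Uzero, Uone, mem_union, mem_setOf_eq, mem_univ, iff_true]
  by_contra hc
  push_neg at hc
  rw [hc.1] at hc
  norm_num at hc

noncomputable def thetaOne : C(Uone, ℝ) := by
  refine ⟨fun z => Complex.arg ((z : Circle) : ℂ), ?_⟩
  rw [continuous_iff_continuousAt]
  intro z
  have h1 : ContinuousAt (fun z : Uone => (z : Circle)) z := continuous_subtype_val.continuousAt
  exact ContinuousAt.comp (x := z) (continuousAt_arg_circle z.2) h1

lemma thetaOne_exp : ∀ z : Uone, Circle.exp (thetaOne z) = (z : Circle) := fun z =>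
  Circle.exp_arg _

noncomputable def thetaZero : C(Uzero, ℝ) := by
  refine ⟨fun z => Complex.arg ((Circle.exp π * (z : Circle) : Circle) : ℂ) + π, ?_⟩
  apply Continuous.add ?_ continuous_const
  rw [continuous_iff_continuousAt]
  intro z
  have h1 : ContinuousAt (fun z : Uzero => (Circle.exp π * (z : Circle) : Circle)) z :=
    (continuous_const.mul continuous_subtype_val).continuousAt
  have h2 : ((Circle.exp π * (z : Circle) : Circle) : ℂ) ≠ -1 := by
    rw [Circle.coe_mul, exp_pi_coe]
    intro hc
    apply z.2
    have : ((z : Circle) : ℂ) = 1 := by linear_combination -hc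
    exact this
  exact ContinuousAt.comp (x := z) (continuousAt_arg_circle h2) h1

lemma thetaZero_exp : ∀ z : Uzero, Circle.exp (thetaZero z) = (z : Circle) := by
  intro z
  show Circle.exp (Complex.arg ((Circle.exp π * (z : Circle) : Circle) : ℂ) + π) = (z : Circle)
  rw [Circle.exp_add, Circle.exp_arg]
  apply Circle.coe_injective
  rw [Circle.coe_mul, Circle.coe_mul, exp_pi_coe]
  ring

lemma homotopic_of_restrict_univ {X Y : Type*} [TopologicalSpace X] [TopologicalSpace Y]
    {f g : C(X, Y)} (h : (f.restrict univ).Homotopic (g.restrict univ)) : f.Homotopic g := by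
  let e : C(X, (univ : Set X)) := ⟨fun x => ⟨x, mem_univ x⟩, Continuous.subtype_mk continuous_id _⟩
  have h2 := ContinuousMap.Homotopic.comp h (ContinuousMap.Homotopic.refl e)
  have hf : (f.restrict univ).comp e = f := by ext x; rfl
  have hg : (g.restrict univ).comp e = g := by ext x; rfl
  rwa [hf, hg] at h2

theorem hD_eq_one {n m : ℤ} (h : n ≠ m) : hD (fpow n) (fpow m) = 1 := by
  apply le_antisymm
  · apply sInf_le
    refine ⟨1, rfl, ![Uzero, Uone], ?_, ?_, ?_⟩
    · intro i
      fin_cases i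
      · exact isOpen_Uzero
      · exact isOpen_Uone
    · rw [eq_univ_iff_forall]
      intro z
      rw [mem_iUnion]
      rcases (eq_univ_iff_forall.mp union_U z) with hz | hz
      · exact ⟨0, hz⟩
      · exact ⟨1, hz⟩
    · intro i
      fin_cases i
      · exact restrict_homotopic_s7 n m Uzero thetaZero thetaZero_exp
      · exact restrict_homotopic_s7 n m Uone thetaOne thetaOne_exp
  · apply le_sInf
    rintro b ⟨k, rfl, U, hopen, hcover, hhom⟩
    match k with
    | 0 =>
      exfalso
      have hU0 : U 0 = univ := by
        rw [← hcover]
        ext x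
        simp [mem_iUnion, Fin.exists_fin_one]
      have := hhom 0
      rw [hU0] at this
      exact h (homotopic_fpow_eq (homotopic_of_restrict_univ this))
    | (k + 1) =>
      exact_mod_cast Nat.succ_le_succ (Nat.zero_le k)

theorem stmt7 (n m : ℤ) (h : n ≠ m) :
    hD (fpow n) (fpow m) = 1 ∧ ¬ (fpow n).Homotopic (fpow m) ∧
    ∃ U₀ U₁ : Set Circle, IsOpen U₀ ∧ IsOpen U₁ ∧ U₀ ∪ U₁ = univ ∧
      ((fpow n).restrict U₀).Homotopic ((fpow m).restrict U₀) ∧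
      ((fpow n).restrict U₁).Homotopic ((fpow m).restrict U₁) := by
  refine ⟨hD_eq_one h, fun hc => h (homotopic_fpow_eq hc), Uzero, Uone,
    isOpen_Uzero, isOpen_Uone, union_U,
    restrict_homotopic_s7 n m Uzero thetaZero thetaZero_exp,
    restrict_homotopic_s7 n m Uone thetaOne thetaOne_exp⟩
end

section
/- For any integer n ≠ 0 and any constant map c : S¹ → S¹, the homotopic distance D(f_n, c) = 1, where f_n(z) = zⁿ. -/
open ContinuousMap Set ENNReal

open Complex unitInterval

section Aux

lemma exp_arg_of_abs_one {w : ℂ} (hw : ‖w‖ = 1) :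
    (Circle.exp (Complex.arg w) : ℂ) = w := by
  rw [Circle.coe_exp]
  have := Complex.norm_mul_exp_arg_mul_I w
  rw [hw] at this; simpa using this

lemma mem_slit {w : ℂ} (hw : ‖w‖ = 1) (hw' : w ≠ -1) : w ∈ Complex.slitPlane := by
  rcases eq_or_ne w.im 0 with h | h
  · left
    have hre : w = (w.re : ℂ) := Complex.ext rfl (by simp [h])
    rw [hre] at hw hw' ⊢
    simp only [Complex.norm_real, Real.norm_eq_abs] at hw
    rcases abs_cases w.re with ⟨h1, _⟩ | ⟨h1, _⟩
    · simp only [Complex.ofReal_re]; nlinarith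
    · exfalso; apply hw'
      have : w.re = -1 := by linarith
      rw [this]; push_cast; ring
  · right; exact h

lemma circle_exp_int_mul (n : ℤ) (x : ℝ) : Circle.exp (n * x) = Circle.exp x ^ n := by
  ext
  rw [Circle.coe_exp]
  push_cast
  rw [mul_assoc, Complex.exp_int_mul, ← Circle.coe_exp]

/-- A continuous choice of logarithm which is constant has equal endpoints. -/
lemma wind_const {θ : I → ℝ} (hθ : Continuous θ) (c : Circle)
    (h : ∀ t, Circle.exp (θ t) = c) : θ 1 = θ 0 := by
  have hπ := Real.pi_pos
  have key : ∀ t : I, ∃ k : ℤ, θ t - θ 0 = k * (2 * Real.pi) := by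
    intro t
    have h1 : Circle.exp (θ t - θ 0) = 1 := by
      rw [Circle.exp_sub, h, h, div_self']
    exact Circle.exp_eq_one.mp h1
  by_contra hne
  obtain ⟨k, hk⟩ := key 1
  have h00 : θ (0:I) - θ 0 = 0 := by ring
  have hk0 : k ≠ 0 := by
    rintro rfl
    push_cast at hk
    exact hne (by linarith)
  set f : I → ℝ := fun t => θ t - θ 0 with hf
  have hfc : Continuous f := hθ.sub continuous_const
  have hint : ∀ x : ℝ, (∃ t, f t = x) → ∃ m : ℤ, x = m * (2 * Real.pi) := by
    rintro x ⟨t, rfl⟩; exact key t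
  rcases hk0.lt_or_gt with hneg | hpos
  · have hmem : -Real.pi ∈ Set.Icc (f 1) (f 0) := by
      constructor
      · rw [hf]; simp only; rw [hk]
        have : (k : ℝ) ≤ -1 := by exact_mod_cast (by omega : k ≤ -1)
        nlinarith
      · simp only [hf, h00]; linarith
    obtain ⟨t, ht⟩ := intermediate_value_univ (1:I) 0 hfc hmem
    obtain ⟨m, hm⟩ := hint _ ⟨t, ht⟩
    have h2 : ((2*m+1 : ℤ) : ℝ) * Real.pi = 0 := by push_cast; linarith
    rcases mul_eq_zero.mp h2 with h3 | h3
    · have : (2*m+1 : ℤ) = 0 := by exact_mod_cast h3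
      omega
    · linarith
  · have hmem : Real.pi ∈ Set.Icc (f 0) (f 1) := by
      constructor
      · simp only [hf, h00]; linarith
      · rw [hf]; simp only; rw [hk]
        have : (1:ℝ) ≤ (k : ℝ) := by exact_mod_cast (by omega : (1:ℤ) ≤ k)
        nlinarith
    obtain ⟨t, ht⟩ := intermediate_value_univ (0:I) 1 hfc hmem
    obtain ⟨m, hm⟩ := hint _ ⟨t, ht⟩
    have h2 : ((2*m-1 : ℤ) : ℝ) * Real.pi = 0 := by push_cast; linarith
    rcases mul_eq_zero.mp h2 with h3 | h3
    · have : (2*m-1 : ℤ) = 0 := by exact_mod_cast h3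
      omega
    · linarith

/-- Winding propagates to a nowhere-antipodal nearby loop. -/
lemma wind_propagate {γ₀ γ₁ : I → Circle} (h₀ : Continuous γ₀) (h₁ : Continuous γ₁)
    (l₀ : γ₀ 0 = γ₀ 1) (l₁ : γ₁ 0 = γ₁ 1)
    (hnear : ∀ t, ((γ₁ t : ℂ)) ≠ -((γ₀ t : ℂ))) {w : ℝ}
    (h : ∃ θ : I → ℝ, Continuous θ ∧ (∀ t, Circle.exp (θ t) = γ₀ t) ∧ θ 1 - θ 0 = w) :
    ∃ θ : I → ℝ, Continuous θ ∧ (∀ t, Circle.exp (θ t) = γ₁ t) ∧ θ 1 - θ 0 = w := by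
  obtain ⟨θ₀, hc, hl, hw⟩ := h
  set q : I → ℂ := fun t => (γ₁ t : ℂ) / (γ₀ t : ℂ) with hq
  have habs : ∀ t, ‖q t‖ = 1 := by
    intro t; show ‖(γ₁ t : ℂ) / (γ₀ t : ℂ)‖ = 1; rw [norm_div, Circle.norm_coe, Circle.norm_coe, div_one]
  have hne : ∀ t, q t ≠ -1 := by
    intro t h
    apply hnear t
    have h0 : (γ₀ t : ℂ) ≠ 0 := Circle.coe_ne_zero _
    simp only [hq] at h; rw [div_eq_iff h0] at h
    linear_combination h
  have hqc : Continuous q := by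
    exact (continuous_subtype_val.comp h₁).div (continuous_subtype_val.comp h₀)
      fun t => Circle.coe_ne_zero _
  refine ⟨fun t => θ₀ t + Complex.arg (q t), ?_, ?_, ?_⟩
  · refine hc.add ?_
    rw [continuous_iff_continuousAt]
    intro t
    exact (Complex.continuousAt_arg (mem_slit (habs t) (hne t))).comp hqc.continuousAt
  · intro t
    ext
    rw [Circle.exp_add, Circle.coe_mul, hl t, exp_arg_of_abs_one (habs t)]
    simp only [hq]
    field_simp
  · have hq01 : q 1 = q 0 := by simp [hq, ← l₀, ← l₁]
    show θ₀ 1 + (q 1).arg - (θ₀ 0 + (q 0).arg) = w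
    rw [hq01]; linarith

lemma not_antipodal {a b : Circle} (h : ‖(a : ℂ) - (b : ℂ)‖ < 2) :
    (a : ℂ) ≠ -(b : ℂ) := by
  intro hab
  rw [hab] at h
  have : ‖-(b : ℂ) - b‖ = 2 := by
    have h2 : -(b : ℂ) - b = -(2 * b) := by ring
    rw [h2, norm_neg, norm_mul]
    simp
    exact Circle.norm_coe b
  linarith

/-- `z ↦ z ^ n` is not homotopic to a constant when `n ≠ 0`. -/
lemma not_homotopic (n : ℤ) (hn : n ≠ 0) (y : Circle) :
    ¬ (fpow n).Homotopic (ContinuousMap.const Circle y) := by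
  have hπ := Real.pi_pos
  rintro ⟨H⟩
  set L : I → I → Circle := fun s t => H (s, Circle.exp (2 * Real.pi * t)) with hL
  have hLcont : Continuous (fun p : I × I => L p.1 p.2) := by
    refine H.continuous.comp ?_
    exact continuous_fst.prodMk
      (Circle.exp.continuous.comp ((continuous_const.mul continuous_subtype_val).comp
        continuous_snd))
  have hloop : ∀ s, L s 0 = L s 1 := by
    intro s
    simp only [hL, Set.Icc.coe_zero, Set.Icc.coe_one, mul_zero, mul_one,
      Circle.exp_zero, Circle.exp_two_pi]
  have hLscont : ∀ s, Continuous (L s) :=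
    fun s => hLcont.comp (continuous_const.prodMk continuous_id)
  have hG : UniformContinuous (fun p : I × I => ((L p.1 p.2 : Circle) : ℂ)) :=
    CompactSpace.uniformContinuous_of_continuous (continuous_subtype_val.comp hLcont)
  obtain ⟨δ, hδ, hδ2⟩ := Metric.uniformContinuous_iff.mp hG 2 two_pos
  set P : I → Prop := fun s => ∃ θ : I → ℝ, Continuous θ ∧
    (∀ t, Circle.exp (θ t) = L s t) ∧ θ 1 - θ 0 = n * (2 * Real.pi) with hP
  have step : ∀ s s' : I, dist s s' < δ → P s → P s' := by
    intro s s' hss hs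
    refine wind_propagate (hLscont s) (hLscont s') (hloop s) (hloop s') ?_ hs
    intro t
    refine not_antipodal ?_
    have hd : dist ((s', t) : I × I) (s, t) < δ := by
      rw [Prod.dist_eq]
      simp only [dist_self]
      exact max_lt (by rwa [dist_comm] at hss) hδ
    have := hδ2 hd
    rwa [Complex.dist_eq] at this
  have base : P 0 := by
    refine ⟨fun t => n * (2 * Real.pi * t), ?_, ?_, ?_⟩
    · exact continuous_const.mul (continuous_const.mul continuous_subtype_val)
    · intro t
      rw [circle_exp_int_mul]
      show Circle.exp (2 * Real.pi * t) ^ n = L 0 t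
      simp only [hL]
      rw [H.apply_zero]
      rfl
    · simp
  -- chain from 0 to 1
  obtain ⟨m, hm⟩ := exists_nat_one_div_lt hδ
  set M : ℕ := m + 1 with hM
  have hMpos : (0:ℝ) < M := by positivity
  set tk : ℕ → I := fun k => Set.projIcc (0:ℝ) 1 zero_le_one ((k:ℝ) / M) with htk
  have key : ∀ k : ℕ, P (tk k) := by
    intro k
    induction k with
    | zero =>
      have : tk 0 = 0 := by
        simp only [htk, Nat.cast_zero, zero_div]
        exact Set.projIcc_left _
      rwa [this]
    | succ k ih =>
      refine step _ _ ?_ ih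
      have h2 := (LipschitzWith.projIcc (a := (0:ℝ)) (b := 1) zero_le_one).dist_le_mul
          (((k+1:ℕ):ℝ)/M) ((k:ℝ)/M)
      rw [NNReal.coe_one, one_mul] at h2
      have h3 : dist (((k+1:ℕ):ℝ)/M) ((k:ℝ)/M) ≤ 1/((m:ℝ)+1) := by
        rw [Real.dist_eq, div_sub_div_same]
        have h1 : ((k+1:ℕ):ℝ) - (k:ℝ) = 1 := by push_cast; ring
        rw [h1, abs_div]
        rw [abs_of_pos hMpos, abs_one, hM]
        push_cast
        exact le_refl _
      rw [dist_comm]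
      exact lt_of_le_of_lt (h2.trans h3) hm
  have hP1 : P 1 := by
    have := key M
    have h1 : tk M = 1 := by
      simp only [htk]
      rw [div_self (ne_of_gt hMpos)]
      exact Set.projIcc_right _
    rwa [h1] at this
  obtain ⟨θ, hθc, hθl, hθw⟩ := hP1
  have hconst : ∀ t, Circle.exp (θ t) = y := by
    intro t
    rw [hθl t]
    simp only [hL]
    rw [H.apply_one]
    rfl
  have hw0 := wind_const hθc y hconst
  rw [hw0, sub_self] at hθw
  have hn0 : (n:ℝ) = 0 := by nlinarith [sq_nonneg ((n:ℝ))]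
  exact hn (by exact_mod_cast hn0)

/-- On the circle minus one point (the antipode of `p`), `z ↦ z ^ n` is homotopic
to any constant map. -/
lemma key_homotopic (n : ℤ) (y p : Circle) :
    ((fpow n).restrict {z : Circle | (z : ℂ) ≠ -(p : ℂ)}).Homotopic
      ((ContinuousMap.const Circle y).restrict {z : Circle | (z : ℂ) ≠ -(p : ℂ)}) := by
  set U : Set Circle := {z : Circle | (z : ℂ) ≠ -(p : ℂ)} with hUdef
  have hp0 : (p : ℂ) ≠ 0 := Circle.coe_ne_zero _
  set A : U → ℝ := fun z =>
    Complex.arg (p : ℂ) + Complex.arg (((z : Circle) : ℂ) / (p : ℂ)) with hA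
  have habs : ∀ z : U, ‖((z : Circle) : ℂ) / (p : ℂ)‖ = 1 := by
    intro z; rw [norm_div, Circle.norm_coe, Circle.norm_coe, div_one]
  have hne : ∀ z : U, ((z : Circle) : ℂ) / (p : ℂ) ≠ -1 := by
    intro z h
    apply z.2
    field_simp at h
    linear_combination h
  have hexpA : ∀ z : U, Circle.exp (A z) = (z : Circle) := by
    intro z
    ext
    rw [hA, Circle.exp_add, Circle.coe_mul,
      exp_arg_of_abs_one (Circle.norm_coe p), exp_arg_of_abs_one (habs z)]
    field_simp
  have hcontA : Continuous A := by
    refine continuous_const.add ?_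
    rw [continuous_iff_continuousAt]
    intro z
    have hf : ContinuousAt (fun z : U => ((z : Circle) : ℂ) / (p : ℂ)) z :=
      ((continuous_subtype_val.comp (continuous_subtype_val : Continuous (Subtype.val : U → Circle))).div_const _).continuousAt
    exact ContinuousAt.comp (g := Complex.arg)
      (Complex.continuousAt_arg (mem_slit (habs z) (hne z))) hf
  constructor
  refine ⟨⟨fun q => Circle.exp ((1 - (q.1 : ℝ)) * (n * A q.2) + (q.1 : ℝ) * Complex.arg (y : ℂ)),
    ?_⟩, ?_, ?_⟩
  · refine Circle.exp.continuous.comp ?_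
    refine Continuous.add ?_ ?_
    · exact (continuous_const.sub (continuous_subtype_val.comp continuous_fst)).mul
        (continuous_const.mul (hcontA.comp continuous_snd))
    · exact (continuous_subtype_val.comp continuous_fst).mul continuous_const
  · intro z
    simp only [ContinuousMap.coe_mk, Set.Icc.coe_zero, sub_zero, one_mul, zero_mul, add_zero]
    rw [circle_exp_int_mul, hexpA]
    rfl
  · intro z
    simp only [ContinuousMap.coe_mk, Set.Icc.coe_one, sub_self, zero_mul, one_mul, zero_add]
    exact Circle.exp_arg y

end Aux

theorem stmt8 (n : ℤ) (hn : n ≠ 0) (y : Circle) :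
    hD (fpow n) (ContinuousMap.const Circle y) = 1 := by
  apply le_antisymm
  · apply sInf_le
    refine ⟨1, rfl, fun i => if i = 0 then {z : Circle | (z : ℂ) ≠ -((1 : Circle) : ℂ)}
      else {z : Circle | (z : ℂ) ≠ -((Circle.exp Real.pi : Circle) : ℂ)}, ?_, ?_, ?_⟩
    · intro i
      fin_cases i
      · exact continuous_subtype_val.isOpen_preimage _ isOpen_ne
      · exact continuous_subtype_val.isOpen_preimage _ isOpen_ne
    · have hexppi : ((Circle.exp Real.pi : Circle) : ℂ) = -1 := by
        rw [Circle.coe_exp]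
        exact Complex.exp_pi_mul_I
      rw [eq_univ_iff_forall]
      intro z
      rw [mem_iUnion]
      by_cases hz : (z : ℂ) = -1
      · refine ⟨1, ?_⟩
        simp only [if_neg (by decide : (1 : Fin 2) ≠ 0)]
        intro h
        rw [hexppi] at h
        rw [hz] at h
        norm_num at h
      · exact ⟨0, by simpa using hz⟩
    · intro i
      fin_cases i
      · exact key_homotopic n y 1
      · exact key_homotopic n y (Circle.exp Real.pi)
  · apply le_sInf
    rintro b ⟨k, rfl, U, hopen, hcover, hhom⟩
    by_contra hlt
    push_neg at hlt
    have hk0 : k = 0 := by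
      have : k < 1 := by exact_mod_cast hlt
      omega
    subst hk0
    have hU0 : U 0 = univ := by
      rw [eq_univ_iff_forall]
      intro z
      have hz : z ∈ ⋃ i, U i := hcover ▸ mem_univ z
      rcases mem_iUnion.mp hz with ⟨i, hi⟩
      rwa [Fin.eq_zero i] at hi
    let e : C(Circle, (U 0 : Set Circle)) :=
      ⟨fun z => ⟨z, hU0 ▸ mem_univ z⟩, Continuous.subtype_mk continuous_id _⟩
    have h := (hhom 0).comp (ContinuousMap.Homotopic.refl e)
    have h1 : ((fpow n).restrict (U 0)).comp e = fpow n := by ext z; rfl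
    have h2 : ((ContinuousMap.const Circle y).restrict (U 0)).comp e =
        ContinuousMap.const Circle y := by ext z; rfl
    rw [h1, h2] at h
    exact not_homotopic n hn y h
end
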